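/- In X_wh, for every sequence (x_k)_{k=1}^d of disjointly supported vectors with d ≤ min supp(x_i) for each i ≤ d, one has (1/2)(∑_{k=1}^d ‖x_k‖^2)^{1/2} ≤ ‖∑_{k=1}^d x_k‖. Combined with the upper ℓ_2 estimate, the basis of X_wh is asymptotic ℓ_2 for vectors with disjoint supports with constant 2. -/

import Mathlib

/-- The first Schreier family: finite sets `F` with `|F| ≤ min F`. -/
def SchreierOne : Set (Finset ℕ) := {F | ∀ k ∈ F, F.card ≤ k}

/-- The minimum of a finite set of naturals (0 for the empty set). -/
noncomputable def finMin (F : Finset ℕ) : ℕ := sInf {k | k ∈ F}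

/-- The convolution `P[Q]` of two families of finite subsets of ℕ:
unions of successive members of `Q` whose minima form a set in `P`. -/
def conv (P Q : Set (Finset ℕ)) : Set (Finset ℕ) :=
  {U | ∃ (d : ℕ) (F : Fin d → Finset ℕ),
    (∀ i, F i ∈ Q) ∧ (∀ i, (F i).Nonempty) ∧
    (∀ i j : Fin d, i < j → ∀ a ∈ F i, ∀ b ∈ F j, a < b) ∧
    (Finset.univ.image fun i => finMin (F i)) ∈ P ∧
    U = Finset.univ.biUnion F}

/-- The modified convolution `P[Q]_M`: unions of pairwise disjoint members of `Q`
whose minima form a set in `P`. -/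
def mconv (P Q : Set (Finset ℕ)) : Set (Finset ℕ) :=
  {U | ∃ (d : ℕ) (F : Fin d → Finset ℕ),
    (∀ i, F i ∈ Q) ∧ (∀ i, (F i).Nonempty) ∧
    (∀ i j : Fin d, i ≠ j → Disjoint (F i) (F j)) ∧
    (Finset.univ.image fun i => finMin (F i)) ∈ P ∧
    U = Finset.univ.biUnion F}

/-- The Schreier families `S_n` (indexed so that `Schreier 1 = S_1`,
`Schreier (n+1) = S_1[S_n]`). -/
def Schreier : ℕ → Set (Finset ℕ)
  | 0 => {F | F.card ≤ 1}
  | 1 => SchreierOne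
  | (n+2) => conv SchreierOne (Schreier (n+1))

/-- The modified Schreier families `S^M_n`. -/
def SchreierM : ℕ → Set (Finset ℕ)
  | 0 => {F | F.card ≤ 1}
  | 1 => SchreierOne
  | (n+2) => mconv SchreierOne (SchreierM (n+1))

/-- The sequence `m_j`: `m_0 = m_1 = 2`, `m_{j+1} = m_j^3`. -/
def mseq : ℕ → ℕ
  | 0 => 2
  | 1 => 2
  | (j+2) => (mseq (j+1)) ^ 3

/-- `ℓ_j = 3 log_2 m_j + 1`. -/
def lseq (j : ℕ) : ℕ := 3 * Nat.log 2 (mseq j) + 1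

/-- The sequence `n_j`: `n_0 = 1` and `n_{j+1} > ℓ_{j+1}(n_j + 1)`. -/
def nseq : ℕ → ℕ
  | 0 => 1
  | (j+1) => lseq (j+1) * (nseq j + 1) + 1

/-- The minimum of the support of an element of `c_00` (0 if empty). -/
noncomputable def minsupp (f : ℕ →₀ ℝ) : ℕ := sInf {k | f k ≠ 0}

/-- The maximum of the support of an element of `c_00` (0 if empty). -/
noncomputable def maxsupp (f : ℕ →₀ ℝ) : ℕ := sSup {k | f k ≠ 0}

/-- Membership in the set `Σ` of candidate special sequences: a nonempty finite list of
pairs `(E_i, j_i)` with the `E_i` pairwise disjoint nonempty finite sets, the `j_i`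
strictly increasing, `j_1 ∈ N_1` and `j_i ∈ N_2` for `i > 1`. -/
def InSigma (N1 N2 : Set ℕ) (l : List (Finset ℕ × ℕ)) : Prop :=
  l ≠ [] ∧
  l.Pairwise (fun a b => Disjoint a.1 b.1) ∧
  l.Chain' (fun a b => a.2 < b.2) ∧
  (∀ a ∈ l.head?, a.2 ∈ N1) ∧
  (∀ a ∈ l.tail, a.2 ∈ N2) ∧
  (∀ a ∈ l, a.1.Nonempty)

/-- `l` is a `σ`-special sequence: it lies in `Σ` and `σ` of each proper initial
segment gives the next index. -/
def IsSpecial (N1 N2 : Set ℕ) (σ : List (Finset ℕ × ℕ) → ℕ)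
    (l : List (Finset ℕ × ℕ)) : Prop :=
  InSigma N1 N2 l ∧
  ∀ (i : ℕ) (h : i + 1 < l.length), σ (l.take (i + 1)) = (l.get ⟨i + 1, h⟩).2

/-- `σ` is an admissible coding: it maps `Σ` into `N_2`, is injective on `Σ`, its values
dominate the indices appearing in the sequence, and it satisfies the growth condition
`m_{2σ(s⌢(E,j))} > m_{2σ(s)}·(max E_last)^2`. -/
def GoodCoding (N1 N2 : Set ℕ) (σ : List (Finset ℕ × ℕ) → ℕ) : Prop :=
  (∀ l, InSigma N1 N2 l → σ l ∈ N2) ∧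
  (∀ l l', InSigma N1 N2 l → InSigma N1 N2 l' → σ l = σ l' → l = l') ∧
  (∀ l, InSigma N1 N2 l → ∀ a ∈ l, a.2 < σ l) ∧
  (∀ (l : List (Finset ℕ × ℕ)) (a : Finset ℕ × ℕ) (h : l ≠ []),
      InSigma N1 N2 l → InSigma N1 N2 (l ++ [a]) →
      mseq (2 * σ l) * (sSup {k | k ∈ (l.getLast h).1}) ^ 2 < mseq (2 * σ (l ++ [a])))

/-- The norming set `D_wh` of the space `X_wh`, together with weights: the minimal set of
finitely supported functionals containing `±e_k^*` and closed under the modified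
`ℓ_2-(1/m_{2j}, S_{n_{2j}})` operations (even case) and under the `ℓ_2` operations on
`S_{n_{2j+1}}` `σ`-special sequences of functionals (odd case). -/
inductive DW (N1 N2 : Set ℕ) (σ : List (Finset ℕ × ℕ) → ℕ) : (ℕ →₀ ℝ) → ℕ → Prop where
  | pos (k : ℕ) : DW N1 N2 σ (Finsupp.single k 1) 0
  | neg (k : ℕ) : DW N1 N2 σ (Finsupp.single k (-1)) 0
  | even (j p : ℕ) (f : Fin p → ℕ →₀ ℝ) (w : Fin p → ℕ) (lam : Fin p → ℝ)
      (hmem : ∀ i, DW N1 N2 σ (f i) (w i))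
      (hdisj : ∀ i i', i ≠ i' → Disjoint (f i).support (f i').support)
      (hallow : (Finset.univ.image fun i => minsupp (f i)) ∈ SchreierM (nseq (2 * j)))
      (hlam : (∑ i, (lam i) ^ 2) ≤ 1) :
      DW N1 N2 σ (((mseq (2 * j) : ℕ) : ℝ)⁻¹ • ∑ i, lam i • f i) (mseq (2 * j))
  | odd (j p : ℕ) (f : Fin p → ℕ →₀ ℝ) (E : Fin p → Finset ℕ) (js : Fin p → ℕ)
      (lam : Fin p → ℝ)
      (hmem : ∀ i, DW N1 N2 σ (f i) (mseq (2 * js i)))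
      (hsupp : ∀ i, (f i).support ⊆ E i)
      (hspec : IsSpecial N1 N2 σ (List.ofFn fun i => (E i, js i)))
      (hallow : (Finset.univ.image fun i => finMin (E i)) ∈ SchreierM (nseq (2 * j + 1)))
      (hbig : ∀ i, 2 * j + 2 < 2 * js i)
      (hlam : (∑ i, (lam i) ^ 2) ≤ 1) :
      DW N1 N2 σ (((mseq (2 * j + 1) : ℕ) : ℝ)⁻¹ • ∑ i, lam i • f i) (mseq (2 * j + 1))

/-- Membership in the norming set `D_wh` (forgetting the weight). -/
def DWh (N1 N2 : Set ℕ) (σ : List (Finset ℕ × ℕ) → ℕ) (f : ℕ →₀ ℝ) : Prop :=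
  ∃ w, DW N1 N2 σ f w

/-- The action of a finitely supported functional on an element of `c_00`. -/
def dotp (f x : ℕ →₀ ℝ) : ℝ := f.sum fun k v => v * x k

/-- The norm of `X_wh` on `c_00`: `‖x‖ = sup {f(x) : f ∈ D_wh}`. -/
noncomputable def wnorm (N1 N2 : Set ℕ) (σ : List (Finset ℕ × ℕ) → ℕ)
    (x : ℕ →₀ ℝ) : ℝ :=
  sSup {r | ∃ f, DWh N1 N2 σ f ∧ r = dotp f x}

lemma mseq_one_le (j : ℕ) : 1 ≤ mseq j := by
  induction j using Nat.strong_induction_on with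
  | _ j ih =>
    match j with
    | 0 => exact one_le_two
    | 1 => exact one_le_two
    | (j+2) => exact Nat.one_le_iff_ne_zero.2 (pow_ne_zero _ (by have := ih (j+1) (by omega); omega))

lemma empty_mem_schreierM (n : ℕ) : (∅ : Finset ℕ) ∈ SchreierM n := by
  match n with
  | 0 => simp [SchreierM]
  | 1 => intro k hk; simp at hk
  | (n+2) =>
    refine ⟨0, Fin.elim0, fun i => i.elim0, fun i => i.elim0, fun i => i.elim0, ?_, ?_⟩
    · convert (empty_mem_schreierM 1) using 1 <;> simp [SchreierOne, SchreierM]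
    · simp

lemma dotp_eq (f x : ℕ →₀ ℝ) : dotp f x = ∑ n ∈ x.support, f n * x n := by
  rw [dotp, Finsupp.sum]
  exact (Finset.sum_subset (Finset.subset_union_left (s₂ := x.support))
      (by intro n _ hn; simp only [Finsupp.mem_support_iff, not_not] at hn; simp [hn])).trans
    (Finset.sum_subset (Finset.subset_union_right (s₁ := f.support))
      (by intro n _ hn; simp only [Finsupp.mem_support_iff, not_not] at hn; simp [hn])).symm

lemma minsupp_mem {f : ℕ →₀ ℝ} (hf : f ≠ 0) : minsupp f ∈ f.support := by
  have h : {k | f k ≠ 0}.Nonempty := by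
    rcases Finsupp.ne_iff.1 hf with ⟨k, hk⟩
    exact ⟨k, by simpa using hk⟩
  have := Nat.sInf_mem h
  simpa [minsupp, Finsupp.mem_support_iff] using this

lemma minsupp_le {f : ℕ →₀ ℝ} {k : ℕ} (hk : k ∈ f.support) : minsupp f ≤ k :=
  Nat.sInf_le (by simpa using Finsupp.mem_support_iff.1 hk)

lemma finMin_mem {F : Finset ℕ} (hF : F.Nonempty) : finMin F ∈ F := by
  have := Nat.sInf_mem (s := {k | k ∈ F}) ⟨hF.choose, hF.choose_spec⟩
  simpa [finMin] using this

lemma finMin_le {F : Finset ℕ} {k : ℕ} (hk : k ∈ F) : finMin F ≤ k := Nat.sInf_le hk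

lemma comb_apply (c : ℝ) {p : ℕ} (lam : Fin p → ℝ) (h : Fin p → ℕ →₀ ℝ) (n : ℕ) :
    ((c • ∑ i, lam i • h i) : ℕ →₀ ℝ) n = c * ∑ i, lam i * h i n := by
  simp [Finsupp.finset_sum_apply]

lemma dotp_comb (c : ℝ) {p : ℕ} (lam : Fin p → ℝ) (h : Fin p → ℕ →₀ ℝ) (x : ℕ →₀ ℝ) :
    dotp (c • ∑ i, lam i • h i) x = c * ∑ i, lam i * dotp (h i) x := by
  simp only [dotp_eq, comb_apply]
  simp only [Finset.mul_sum, Finset.sum_mul]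
  rw [Finset.sum_comm]
  exact Finset.sum_congr rfl fun i _ => Finset.sum_congr rfl fun n _ => by ring

lemma dotp_single (n : ℕ) (c : ℝ) (x : ℕ →₀ ℝ) : dotp (Finsupp.single n c) x = c * x n := by
  by_cases hc : c = 0 <;> simp [dotp, Finsupp.sum_single_index, hc]

lemma mySumCollapse {p : ℕ} {h : Fin p → ℕ →₀ ℝ}
    (hdisj : ∀ i i', i ≠ i' → Disjoint (h i).support (h i').support)
    (lam : Fin p → ℝ) {n : ℕ} {i₀ : Fin p} (h₀ : h i₀ n ≠ 0) :
    ∑ i, lam i * h i n = lam i₀ * h i₀ n := by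
  refine Finset.sum_eq_single i₀ (fun j _ hj => ?_) (by simp)
  have : h j n = 0 := by
    by_contra hjn
    exact (Finset.disjoint_left.1 (hdisj j i₀ hj)) (Finsupp.mem_support_iff.2 hjn)
      (Finsupp.mem_support_iff.2 h₀) |>.elim
  simp [this]

lemma pairwise_disjoint_E {N1 N2 : Set ℕ} {σ : List (Finset ℕ × ℕ) → ℕ} {p : ℕ}
    {E : Fin p → Finset ℕ} {js : Fin p → ℕ}
    (hspec : IsSpecial N1 N2 σ (List.ofFn fun i => (E i, js i))) :
    ∀ i j : Fin p, i ≠ j → Disjoint (E i) (E j) := by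
  have hp := hspec.1.2.1
  rw [List.pairwise_ofFn] at hp
  intro i j hij
  rcases hij.lt_or_gt with h | h
  · exact hp h
  · exact (hp h).symm

lemma mseq_cast_pos (j : ℕ) : (0:ℝ) < ((mseq j : ℕ) : ℝ) := by
  have := mseq_one_le j; exact_mod_cast Nat.lt_of_lt_of_le Nat.zero_lt_one this

lemma mseq_inv_nonneg (j : ℕ) : (0:ℝ) ≤ (((mseq j : ℕ) : ℝ))⁻¹ := by
  exact inv_nonneg.2 (le_of_lt (mseq_cast_pos j))

lemma mseq_inv_le_one (j : ℕ) : (((mseq j : ℕ) : ℝ))⁻¹ ≤ 1 := by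
  have h1 : (1:ℝ) ≤ ((mseq j : ℕ) : ℝ) := by exact_mod_cast mseq_one_le j
  exact inv_le_one_of_one_le₀ h1

lemma sq_sum_le_one_abs {p : ℕ} {lam : Fin p → ℝ} (hlam : ∑ i, (lam i)^2 ≤ 1) (i₀ : Fin p) :
    |lam i₀| ≤ 1 := by
  rw [← Real.sqrt_one, ← Real.sqrt_sq_eq_abs]
  refine Real.sqrt_le_sqrt ?_
  calc (lam i₀)^2 ≤ ∑ i, (lam i)^2 :=
        Finset.single_le_sum (f := fun i => (lam i)^2) (fun i _ => sq_nonneg _)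
          (Finset.mem_univ i₀)
    _ ≤ 1 := hlam

lemma abs_comb_le_one {p : ℕ} {f : Fin p → ℕ →₀ ℝ} (lam : Fin p → ℝ) (m : ℕ)
    (hdisj : ∀ i i', i ≠ i' → Disjoint (f i).support (f i').support)
    (hlam : ∑ i, (lam i)^2 ≤ 1) (ih : ∀ i n, |f i n| ≤ 1) (n : ℕ) :
    |(((((m : ℕ) : ℝ))⁻¹ • ∑ i, lam i • f i) : ℕ →₀ ℝ) n| ≤ 1 := by
  rw [comb_apply]
  by_cases hall : ∀ i, f i n = 0
  · simp [hall]
  · push_neg at hall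
    obtain ⟨i₀, hi₀⟩ := hall
    rw [mySumCollapse hdisj lam hi₀, abs_mul, abs_mul]
    have h2 : |((m:ℕ):ℝ)⁻¹| ≤ 1 := by
      rw [abs_inv, Nat.abs_cast]
      rcases Nat.eq_zero_or_pos m with hm | hm
      · simp [hm]
      · exact inv_le_one_of_one_le₀ (by exact_mod_cast hm)
    have h1 := sq_sum_le_one_abs hlam i₀
    have h3 := ih i₀ n
    have e1 : |lam i₀| * |(f i₀) n| ≤ 1 := by nlinarith [abs_nonneg (lam i₀), abs_nonneg ((f i₀) n)]
    nlinarith [abs_nonneg (((m:ℕ):ℝ))⁻¹, mul_nonneg (abs_nonneg (lam i₀)) (abs_nonneg ((f i₀) n))]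

lemma supp_disj_of_odd {N1 N2 : Set ℕ} {σ : List (Finset ℕ × ℕ) → ℕ} {p : ℕ}
    {f : Fin p → ℕ →₀ ℝ} {E : Fin p → Finset ℕ} {js : Fin p → ℕ}
    (hsupp : ∀ i, (f i).support ⊆ E i)
    (hspec : IsSpecial N1 N2 σ (List.ofFn fun i => (E i, js i))) :
    ∀ i i', i ≠ i' → Disjoint (f i).support (f i').support := fun i i' hii =>
  Finset.disjoint_left.2 fun a ha ha' =>
    (Finset.disjoint_left.1 (pairwise_disjoint_E hspec i i' hii)) (hsupp i ha) (hsupp i' ha')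

lemma dw_abs_apply_le_one {N1 N2 : Set ℕ} {σ : List (Finset ℕ × ℕ) → ℕ} {f : ℕ →₀ ℝ} {w : ℕ}
    (hf : DW N1 N2 σ f w) : ∀ n, |f n| ≤ 1 := by
  induction hf with
  | pos k => intro n; rw [Finsupp.single_apply]; split <;> simp
  | neg k => intro n; rw [Finsupp.single_apply]; split <;> simp
  | even j p f w lam hmem hdisj hallow hlam ih =>
    exact abs_comb_le_one lam _ hdisj hlam ih
  | odd j p f E js lam hmem hsupp hspec hallow hbig hlam ih =>
    exact abs_comb_le_one lam _ (supp_disj_of_odd hsupp hspec) hlam ih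

lemma dw_zero (N1 N2 : Set ℕ) (σ : List (Finset ℕ × ℕ) → ℕ) (j : ℕ) :
    DW N1 N2 σ 0 (mseq (2*j)) := by
  have h := DW.even (N1 := N1) (N2 := N2) (σ := σ) j 0 (fun i => 0) (fun i => 0) (fun i => 0)
    (fun i => i.elim0) (fun i => i.elim0) (by simpa using empty_mem_schreierM _) (by simp)
  simpa using h

lemma wnormSet_nonempty (N1 N2 : Set ℕ) (σ : List (Finset ℕ × ℕ) → ℕ) (x : ℕ →₀ ℝ) :
    {r | ∃ f, DWh N1 N2 σ f ∧ r = dotp f x}.Nonempty :=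
  ⟨dotp (Finsupp.single 0 1) x, ⟨Finsupp.single 0 1, ⟨0, DW.pos 0⟩, rfl⟩⟩

lemma wnormSet_bddAbove (N1 N2 : Set ℕ) (σ : List (Finset ℕ × ℕ) → ℕ) (x : ℕ →₀ ℝ) :
    BddAbove {r | ∃ f, DWh N1 N2 σ f ∧ r = dotp f x} := by
  refine ⟨∑ n ∈ x.support, |x n|, fun r hr => ?_⟩
  obtain ⟨f, ⟨w, hf⟩, rfl⟩ := hr
  rw [dotp_eq]
  calc ∑ n ∈ x.support, f n * x n ≤ ∑ n ∈ x.support, |f n * x n| :=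
        Finset.sum_le_sum fun n _ => le_abs_self _
    _ ≤ ∑ n ∈ x.support, |x n| := by
        refine Finset.sum_le_sum fun n _ => ?_
        rw [abs_mul]
        nlinarith [dw_abs_apply_le_one hf n, abs_nonneg (x n), abs_nonneg (f n)]

lemma dotp_le_wnorm {N1 N2 : Set ℕ} {σ : List (Finset ℕ × ℕ) → ℕ} {f x : ℕ →₀ ℝ}
    (hf : DWh N1 N2 σ f) : dotp f x ≤ wnorm N1 N2 σ x :=
  le_csSup (wnormSet_bddAbove N1 N2 σ x) ⟨f, hf, rfl⟩

lemma wnorm_nonneg (N1 N2 : Set ℕ) (σ : List (Finset ℕ × ℕ) → ℕ) (x : ℕ →₀ ℝ) :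
    0 ≤ wnorm N1 N2 σ x := by
  rcases le_total 0 (x 0) with h | h
  · calc (0:ℝ) ≤ x 0 := h
      _ = dotp (Finsupp.single 0 1) x := by rw [dotp_single]; ring
      _ ≤ _ := dotp_le_wnorm ⟨0, DW.pos 0⟩
  · calc (0:ℝ) ≤ -(x 0) := by linarith
      _ = dotp (Finsupp.single 0 (-1)) x := by rw [dotp_single]; ring
      _ ≤ _ := dotp_le_wnorm ⟨0, DW.neg 0⟩

lemma dotp_eq_zero_of_disj {f x : ℕ →₀ ℝ} (h : Disjoint f.support x.support) :
    dotp f x = 0 := by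
  rw [dotp_eq]
  refine Finset.sum_eq_zero fun n hn => ?_
  have : f n = 0 := by
    by_contra hfn
    exact (Finset.disjoint_left.1 h) (Finsupp.mem_support_iff.2 hfn) hn
  simp [this]

lemma dotp_filter {f x : ℕ →₀ ℝ} {E : Finset ℕ} (h : x.support ⊆ E) :
    dotp (f.filter (· ∈ E)) x = dotp f x := by
  rw [dotp_eq, dotp_eq]
  refine Finset.sum_congr rfl fun n hn => ?_
  rw [Finsupp.filter_apply_pos _ _ (h hn)]

lemma schreierOne_spread {A B : Finset ℕ} (hA : A ∈ SchreierOne)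
    (φ : ℕ → ℕ) (hinj : Set.InjOn φ B) (hφ : ∀ b ∈ B, φ b ∈ A ∧ φ b ≤ b) :
    B ∈ SchreierOne := by
  intro k hk
  calc B.card ≤ A.card := Finset.card_le_card_of_injOn φ (fun b hb => (hφ b hb).1) hinj
    _ ≤ φ k := hA _ (hφ k hk).1
    _ ≤ k := (hφ k hk).2

lemma schreierM_spread : ∀ (n : ℕ) (A B : Finset ℕ), A ∈ SchreierM n →
    ∀ φ : ℕ → ℕ, Set.InjOn φ B → (∀ b ∈ B, φ b ∈ A ∧ φ b ≤ b) → B ∈ SchreierM n := by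
  intro n
  induction n using Nat.strong_induction_on with
  | _ n ihn =>
    match n with
    | 0 =>
      intro A B hA φ hinj hφ
      show B.card ≤ 1
      calc B.card ≤ A.card := Finset.card_le_card_of_injOn φ (fun b hb => (hφ b hb).1) hinj
        _ ≤ 1 := hA
    | 1 => exact fun A B hA φ hinj hφ => schreierOne_spread hA φ hinj hφ
    | (n+2) =>
      intro A B hA φ hinj hφ
      obtain ⟨d, F, hFQ, hFne, hFdisj, hFmin, hU⟩ := hA
      classical
      set Bf : Fin d → Finset ℕ := fun i => B.filter (fun b => φ b ∈ F i) with hBf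
      have hBfsub : ∀ i, Bf i ⊆ B := fun i => Finset.filter_subset _ _
      have hBdisj : ∀ i j : Fin d, i ≠ j → Disjoint (Bf i) (Bf j) := by
        intro i j hij
        refine Finset.disjoint_left.2 fun b hbi hbj => ?_
        exact (Finset.disjoint_left.1 (hFdisj i j hij))
          (Finset.mem_filter.1 hbi).2 (Finset.mem_filter.1 hbj).2
      have hBcover : ∀ b ∈ B, ∃ i, b ∈ Bf i := by
        intro b hb
        have h1 : φ b ∈ A := (hφ b hb).1
        rw [hU, Finset.mem_biUnion] at h1
        obtain ⟨i, _, hi⟩ := h1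
        exact ⟨i, Finset.mem_filter.2 ⟨hb, hi⟩⟩
      set I : Finset (Fin d) := Finset.univ.filter (fun i => (Bf i).Nonempty) with hI
      set e : Fin I.card ≃ {i // i ∈ I} := I.equivFin.symm with he
      have heI : ∀ i', (e i').1 ∈ I := fun i' => (e i').2
      have hne : ∀ i', (Bf (e i').1).Nonempty := by
        intro i'
        exact (Finset.mem_filter.1 (heI i')).2
      refine ⟨I.card, fun i' => Bf (e i').1, ?_, hne, ?_, ?_, ?_⟩
      · intro i'
        refine ihn (n+1) (by omega) (F (e i').1) (Bf (e i').1) (hFQ _) φ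
          (hinj.mono ?_) (fun b hb => ⟨(Finset.mem_filter.1 hb).2, (hφ b (hBfsub _ hb)).2⟩)
        intro b hb
        exact hBfsub _ hb
      · intro i' j' hij
        exact hBdisj _ _ (fun hc => hij (e.injective (Subtype.ext hc)))
      · -- minima
        refine schreierOne_spread hFmin
          (fun m => if h : ∃ i ∈ I, finMin (Bf i) = m then finMin (F h.choose) else m) ?_ ?_
        · -- InjOn
          intro b1 hb1 b2 hb2 heq
          simp only [Finset.coe_image, Set.mem_image] at hb1 hb2
          obtain ⟨i1', _, rfl⟩ := hb1
          obtain ⟨i2', _, rfl⟩ := hb2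
          have h1 : ∃ i ∈ I, finMin (Bf i) = finMin (Bf (e i1').1) := ⟨(e i1').1, heI i1', rfl⟩
          have h2 : ∃ i ∈ I, finMin (Bf i) = finMin (Bf (e i2').1) := ⟨(e i2').1, heI i2', rfl⟩
          simp only [dif_pos h1, dif_pos h2] at heq
          obtain ⟨hc1I, hc1⟩ := h1.choose_spec
          obtain ⟨hc2I, hc2⟩ := h2.choose_spec
          have hFne1 : (F h1.choose).Nonempty := hFne _
          have hFne2 : (F h2.choose).Nonempty := hFne _
          have : h1.choose = h2.choose := by
            by_contra hcc
            exact (Finset.disjoint_left.1 (hFdisj _ _ hcc))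
              (finMin_mem hFne1) (heq ▸ finMin_mem hFne2)
          rw [← hc1, ← hc2, this]
        · intro b hb
          simp only [Finset.mem_image] at hb
          obtain ⟨i', _, rfl⟩ := hb
          have h1 : ∃ i ∈ I, finMin (Bf i) = finMin (Bf (e i').1) := ⟨(e i').1, heI i', rfl⟩
          simp only [dif_pos h1]
          obtain ⟨hcI, hc⟩ := h1.choose_spec
          have hnec : (Bf h1.choose).Nonempty := (Finset.mem_filter.1 hcI).2
          constructor
          · exact Finset.mem_image.2 ⟨h1.choose, Finset.mem_univ _, rfl⟩
          · have hmem := finMin_mem hnec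
            have hφm := (Finset.mem_filter.1 hmem).2
            have hle : finMin (F h1.choose) ≤ finMin (Bf h1.choose) :=
              le_trans (finMin_le hφm) (hφ _ (hBfsub _ (finMin_mem hnec))).2
            exact le_trans hle (le_of_eq hc)
      · -- B = biUnion
        apply Finset.Subset.antisymm
        · intro b hb
          obtain ⟨i, hbi⟩ := hBcover b hb
          have hiI : i ∈ I := by
            rw [hI, Finset.mem_filter]
            exact ⟨Finset.mem_univ _, ⟨b, hbi⟩⟩
          rw [Finset.mem_biUnion]
          exact ⟨e.symm ⟨i, hiI⟩, Finset.mem_univ _, by simpa using hbi⟩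
        · intro b hb
          rw [Finset.mem_biUnion] at hb
          obtain ⟨i', _, hbi⟩ := hb
          exact hBfsub _ hbi

lemma sum_equivFin {α : Type*} {M : Type*} [AddCommMonoid M] (s : Finset α) (g : α → M) :
    ∑ i' : Fin s.card, g (s.equivFin.symm i').1 = ∑ i ∈ s, g i := by
  rw [← Finset.sum_coe_sort s g]
  exact Equiv.sum_comp s.equivFin.symm (fun a => g a.1)

lemma image_equivFin {α β : Type*} [DecidableEq β] (s : Finset α) (g : α → β) :
    (Finset.univ.image fun i' : Fin s.card => g (s.equivFin.symm i').1) = s.image g := by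
  ext b
  simp only [Finset.mem_image, Finset.mem_univ, true_and]
  constructor
  · rintro ⟨i', rfl⟩
    exact ⟨(s.equivFin.symm i').1, (s.equivFin.symm i').2, rfl⟩
  · rintro ⟨a, ha, rfl⟩
    exact ⟨s.equivFin ⟨a, ha⟩, by simp⟩

lemma image_minsupp_spread {p n : ℕ} {F G : Fin p → ℕ →₀ ℝ}
    (hdisj : ∀ i i', i ≠ i' → Disjoint (F i).support (F i').support)
    (hsub : ∀ i, (G i).support ⊆ (F i).support)
    (s : Finset (Fin p)) (hs : ∀ i ∈ s, G i ≠ 0)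
    (hA : (Finset.univ.image fun i => minsupp (F i)) ∈ SchreierM n) :
    (s.image fun i => minsupp (G i)) ∈ SchreierM n := by
  classical
  have hFne : ∀ i ∈ s, F i ≠ 0 := by
    intro i hi
    have h1 : (G i).support.Nonempty := Finsupp.support_nonempty_iff.2 (hs i hi)
    exact Finsupp.support_nonempty_iff.1 ⟨h1.choose, hsub i h1.choose_spec⟩
  have key : ∀ i ∈ s, minsupp (G i) ∈ (F i).support ∧ minsupp (F i) ≤ minsupp (G i) := by
    intro i hi
    have h1 : minsupp (G i) ∈ (F i).support := hsub i (minsupp_mem (hs i hi))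
    exact ⟨h1, minsupp_le h1⟩
  refine schreierM_spread n _ _ hA
    (fun m => if h : ∃ i ∈ s, minsupp (G i) = m then minsupp (F h.choose) else m) ?_ ?_
  · intro b1 hb1 b2 hb2 heq
    simp only [Finset.coe_image, Set.mem_image, Finset.mem_coe] at hb1 hb2
    obtain ⟨i1, hi1, rfl⟩ := hb1
    obtain ⟨i2, hi2, rfl⟩ := hb2
    have h1 : ∃ i ∈ s, minsupp (G i) = minsupp (G i1) := ⟨i1, hi1, rfl⟩
    have h2 : ∃ i ∈ s, minsupp (G i) = minsupp (G i2) := ⟨i2, hi2, rfl⟩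
    simp only [dif_pos h1, dif_pos h2] at heq
    obtain ⟨hc1s, hc1⟩ := h1.choose_spec
    obtain ⟨hc2s, hc2⟩ := h2.choose_spec
    have hch : h1.choose = h2.choose := by
      by_contra hcc
      have m1 : minsupp (F h1.choose) ∈ (F h1.choose).support :=
        minsupp_mem (hFne _ hc1s)
      have m2 : minsupp (F h2.choose) ∈ (F h2.choose).support :=
        minsupp_mem (hFne _ hc2s)
      exact (Finset.disjoint_left.1 (hdisj _ _ hcc)) m1 (heq ▸ m2)
    rw [← hc1, ← hc2, hch]
  · intro b hb
    simp only [Finset.mem_image] at hb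
    obtain ⟨i, hi, rfl⟩ := hb
    have h1 : ∃ i' ∈ s, minsupp (G i') = minsupp (G i) := ⟨i, hi, rfl⟩
    simp only [dif_pos h1]
    obtain ⟨hcs, hc⟩ := h1.choose_spec
    refine ⟨Finset.mem_image.2 ⟨h1.choose, Finset.mem_univ _, rfl⟩, ?_⟩
    exact le_trans (key _ hcs).2 (le_of_eq hc)

lemma filter_comb (c : ℝ) {p : ℕ} (lam : Fin p → ℝ) (h : Fin p → ℕ →₀ ℝ) (E : Finset ℕ) :
    (c • ∑ i, lam i • h i).filter (· ∈ E) = c • ∑ i, lam i • (h i).filter (· ∈ E) := by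
  ext n
  rw [Finsupp.filter_apply, comb_apply, comb_apply]
  split_ifs with hn
  · refine congrArg _ (Finset.sum_congr rfl fun i _ => ?_)
    rw [Finsupp.filter_apply_pos _ _ hn]
  · rw [eq_comm, mul_eq_zero]
    right
    refine Finset.sum_eq_zero fun i _ => ?_
    rw [Finsupp.filter_apply_neg _ _ hn, mul_zero]

lemma mem_supp_comb {c : ℝ} {p : ℕ} {lam : Fin p → ℝ} {h : Fin p → ℕ →₀ ℝ} {n : ℕ}
    (hn : ((c • ∑ i, lam i • h i) : ℕ →₀ ℝ) n ≠ 0) : ∃ i, lam i ≠ 0 ∧ h i n ≠ 0 := by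
  rw [comb_apply] at hn
  have h2 : ∑ i, lam i * h i n ≠ 0 := fun hz => hn (by rw [hz, mul_zero])
  obtain ⟨i, _, hi⟩ := Finset.exists_ne_zero_of_sum_ne_zero h2
  exact ⟨i, fun hz => hi (by rw [hz, zero_mul]), fun hz => hi (by rw [hz, mul_zero])⟩

lemma supp_component_subset {c : ℝ} (hc : c ≠ 0) {p : ℕ} {lam : Fin p → ℝ}
    {h : Fin p → ℕ →₀ ℝ}
    (hdisj : ∀ i i', i ≠ i' → Disjoint (h i).support (h i').support)
    {i : Fin p} (hli : lam i ≠ 0) :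
    (h i).support ⊆ ((c • ∑ i, lam i • h i) : ℕ →₀ ℝ).support := by
  intro n hn
  rw [Finsupp.mem_support_iff] at hn ⊢
  rw [comb_apply, mySumCollapse hdisj lam hn]
  exact mul_ne_zero hc (mul_ne_zero hli hn)

lemma dw_restrict {N1 N2 : Set ℕ} {σ : List (Finset ℕ × ℕ) → ℕ} {f : ℕ →₀ ℝ} {w : ℕ}
    (hf : DW N1 N2 σ f w) :
    ∀ E : Finset ℕ, f.filter (· ∈ E) = 0 ∨ DW N1 N2 σ (f.filter (· ∈ E)) w := by
  induction hf with
  | pos k =>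
    intro E
    by_cases hk : k ∈ E
    · right; rw [Finsupp.filter_single_of_pos _ hk]; exact DW.pos k
    · left; exact Finsupp.filter_single_of_neg _ hk
  | neg k =>
    intro E
    by_cases hk : k ∈ E
    · right; rw [Finsupp.filter_single_of_pos _ hk]; exact DW.neg k
    · left; exact Finsupp.filter_single_of_neg _ hk
  | even j p f w lam hmem hdisj hallow hlam ih =>
    intro E
    classical
    rw [filter_comb]
    set G : Fin p → ℕ →₀ ℝ := fun i => (f i).filter (· ∈ E) with hG
    set I : Finset (Fin p) := Finset.univ.filter (fun i => G i ≠ 0) with hI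
    have hGsub : ∀ i, (G i).support ⊆ (f i).support := by
      intro i
      rw [hG]
      simp only [Finsupp.support_filter]
      exact Finset.filter_subset _ _
    by_cases hIe : I = ∅
    · left
      have hz : ∀ i, lam i • G i = 0 := by
        intro i
        by_cases h0 : G i = 0
        · rw [h0, smul_zero]
        · exact absurd (hI ▸ Finset.mem_filter.2 ⟨Finset.mem_univ i, h0⟩)
            (by rw [hIe]; exact Finset.notMem_empty i)
      rw [Finset.sum_congr rfl (fun i _ => hz i), Finset.sum_const_zero, smul_zero]
    · right
      have heq : (∑ i, lam i • G i) = ∑ i' : Fin I.card, lam (I.equivFin.symm i').1 • G (I.equivFin.symm i').1 := by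
        rw [sum_equivFin I (fun i => lam i • G i)]
        refine (Finset.sum_subset (Finset.subset_univ I) ?_).symm
        intro i _ hiI
        have : G i = 0 := by
          by_contra h0
          exact hiI (hI ▸ Finset.mem_filter.2 ⟨Finset.mem_univ i, h0⟩)
        rw [this, smul_zero]
      rw [heq]
      refine DW.even j I.card _ (fun i' => w (I.equivFin.symm i').1) _
        (fun i' => ?_) (fun i' i'' hne => ?_) ?_ ?_
      · rcases ih (I.equivFin.symm i').1 E with h0 | hdw
        · exact absurd h0 (by
            have := (I.equivFin.symm i').2
            simp only [hI, Finset.mem_filter] at this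
            exact this.2)
        · exact hdw
      · have hne2 : (I.equivFin.symm i').1 ≠ (I.equivFin.symm i'').1 := by
          intro hc
          exact hne (by
            have := congrArg I.equivFin (Subtype.ext hc)
            simpa using this)
        exact Finset.disjoint_of_subset_left (hGsub _)
          (Finset.disjoint_of_subset_right (hGsub _) (hdisj _ _ hne2))
      · rw [image_equivFin I (fun i => minsupp (G i))]
        refine image_minsupp_spread hdisj hGsub I ?_ hallow
        intro i hi
        rw [hI, Finset.mem_filter] at hi
        exact hi.2
      · calc ∑ i' : Fin I.card, lam (I.equivFin.symm i').1 ^ 2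
            = ∑ i ∈ I, lam i ^ 2 := sum_equivFin I (fun i => lam i ^ 2)
          _ ≤ ∑ i, lam i ^ 2 :=
            Finset.sum_le_sum_of_subset_of_nonneg (Finset.subset_univ I)
              (fun i _ _ => sq_nonneg _)
          _ ≤ 1 := hlam
  | odd j p f E js lam hmem hsupp hspec hallow hbig hlam ih =>
    intro Ef
    classical
    right
    rw [filter_comb]
    refine DW.odd j p (fun i => (f i).filter (· ∈ Ef)) E js lam (fun i => ?_)
      (fun i => ?_) hspec hallow hbig hlam
    · rcases ih i Ef with h0 | hdw
      · simp only [h0]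
        exact dw_zero N1 N2 σ (js i)
      · exact hdw
    · refine subset_trans ?_ (hsupp i)
      simp only [Finsupp.support_filter]
      exact Finset.filter_subset _ _

lemma claimU_base {N1 N2 : Set ℕ} {σ : List (Finset ℕ × ℕ) → ℕ} (n : ℕ) (c : ℝ)
    (hc : c = 1 ∨ c = -1) {q : ℕ} {x : Fin q → ℕ →₀ ℝ}
    (hx : ∀ k k', k ≠ k' → Disjoint (x k).support (x k').support) :
    ∃ (μ : Fin q → ℝ) (g : Fin q → ℕ →₀ ℝ),
      (∀ k, 0 ≤ μ k) ∧ (∑ k, (μ k)^2 ≤ 1) ∧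
      (∀ k, g k = 0 ∨ (DW N1 N2 σ (g k) 0 ∧
        (g k).support ⊆ (Finsupp.single n c).support ∩ (x k).support)) ∧
      (∀ k, 0 ≤ dotp (g k) (x k)) ∧
      |dotp (Finsupp.single n c) (∑ kk, x kk)| ≤ ∑ k, μ k * dotp (g k) (x k) := by
  classical
  have hcne : c ≠ 0 := by rcases hc with rfl | rfl <;> norm_num
  have hXn : (∑ kk, x kk) n = ∑ kk, x kk n := Finsupp.finset_sum_apply _ _ _
  by_cases hex : ∃ k0 : Fin q, x k0 n ≠ 0
  · obtain ⟨k0, hk0⟩ := hex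
    set s : ℝ := if 0 ≤ x k0 n then 1 else -1 with hs
    have hsdw : DW N1 N2 σ (Finsupp.single n s) 0 := by
      rw [hs]; split
      · exact DW.pos n
      · exact DW.neg n
    have hsne : s ≠ 0 := by rw [hs]; split <;> norm_num
    have hsd : s * x k0 n = |x k0 n| := by
      rw [hs]; split <;> rename_i h
      · rw [abs_of_nonneg h, one_mul]
      · rw [abs_of_neg (lt_of_not_ge h)]; ring
    refine ⟨fun k => if k = k0 then 1 else 0,
      fun k => if k = k0 then Finsupp.single n s else 0,
      fun k => by dsimp only; split <;> norm_num, ?_, ?_, ?_, ?_⟩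
    · rw [Finset.sum_eq_single k0 (fun k _ hk => by simp [hk]) (by simp)]
      simp
    · intro k
      by_cases hk : k = k0
      · subst hk
        right
        dsimp only
        rw [if_pos rfl]
        refine ⟨hsdw, ?_⟩
        rw [Finsupp.support_single_ne_zero n hsne, Finsupp.support_single_ne_zero n hcne]
        intro a ha
        rw [Finset.mem_singleton] at ha
        subst ha
        exact Finset.mem_inter.2 ⟨Finset.mem_singleton_self _, Finsupp.mem_support_iff.2 hk0⟩
      · left
        dsimp only
        rw [if_neg hk]
    · intro k
      by_cases hk : k = k0
      · subst hk
        dsimp only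
        rw [if_pos rfl, dotp_single, hsd]
        exact abs_nonneg _
      · dsimp only
        rw [if_neg hk]
        simp [dotp]
    · have hcol : ∑ kk, x kk n = x k0 n := by
        refine Finset.sum_eq_single k0 (fun j _ hj => ?_) (by simp)
        by_contra hz
        exact (Finset.disjoint_left.1 (hx j k0 hj)) (Finsupp.mem_support_iff.2 hz)
          (Finsupp.mem_support_iff.2 hk0)
      rw [dotp_single, hXn, hcol,
        Finset.sum_eq_single k0 (fun k _ hk => by simp [hk]) (by simp)]
      dsimp only
      rw [if_pos rfl, if_pos rfl, dotp_single, hsd, one_mul, abs_mul]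
      have habs : |c| = 1 := by rcases hc with rfl | rfl <;> norm_num
      rw [habs, one_mul]
  · push_neg at hex
    refine ⟨0, 0, by simp, by simp, fun k => Or.inl rfl, by simp [dotp], ?_⟩
    rw [dotp_single, hXn, Finset.sum_eq_zero fun k _ => hex k, mul_zero, abs_zero]
    simp [dotp]

lemma claimU {N1 N2 : Set ℕ} {σ : List (Finset ℕ × ℕ) → ℕ} {f : ℕ →₀ ℝ} {w : ℕ}
    (hf : DW N1 N2 σ f w) {q : ℕ} {x : Fin q → ℕ →₀ ℝ}
    (hx : ∀ k k', k ≠ k' → Disjoint (x k).support (x k').support) :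
    ∃ (μ : Fin q → ℝ) (g : Fin q → ℕ →₀ ℝ),
      (∀ k, 0 ≤ μ k) ∧ (∑ k, (μ k)^2 ≤ 1) ∧
      (∀ k, g k = 0 ∨ (DW N1 N2 σ (g k) w ∧ (g k).support ⊆ f.support ∩ (x k).support)) ∧
      (∀ k, 0 ≤ dotp (g k) (x k)) ∧
      |dotp f (∑ kk, x kk)| ≤ ∑ k, μ k * dotp (g k) (x k) := by
  classical
  induction hf with
  | pos n => exact claimU_base n 1 (Or.inl rfl) hx
  | neg n => exact claimU_base n (-1) (Or.inr rfl) hx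
  | even j p f w lam hmem hdisj hallow hlam ih =>
    choose μm gm h1 h2 h3 h4 h5 using ih
    set M : ℝ := ((mseq (2*j) : ℕ) : ℝ)⁻¹ with hM
    have hMnn : 0 ≤ M := mseq_inv_nonneg _
    have hMne : M ≠ 0 := by
      rw [hM]
      exact inv_ne_zero (ne_of_gt (mseq_cast_pos _))
    set d : Fin p → Fin q → ℝ := fun i k => dotp (gm i k) (x k) with hd
    set t : Fin q → ℝ := fun k => Real.sqrt (∑ i, (lam i)^2 * (μm i k)^2) with ht
    set β : Fin p → Fin q → ℝ := fun i k => (|lam i| * μm i k) / t k with hβ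
    have htnn : ∀ k, 0 ≤ t k := fun k => Real.sqrt_nonneg _
    have htsq : ∀ k, (t k)^2 = ∑ i, (lam i)^2 * (μm i k)^2 := fun k =>
      Real.sq_sqrt (Finset.sum_nonneg fun i _ => mul_nonneg (sq_nonneg _) (sq_nonneg _))
    have hβnn : ∀ i k, 0 ≤ β i k := fun i k =>
      div_nonneg (mul_nonneg (abs_nonneg _) (h1 i k)) (htnn k)
    have hβsq : ∀ k, ∑ i, (β i k)^2 ≤ 1 := by
      intro k
      by_cases htk : t k = 0
      · simp only [hβ, htk, div_zero]
        simp
      · have : ∑ i, (β i k)^2 = (∑ i, (lam i)^2 * (μm i k)^2) / (t k)^2 := by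
          rw [Finset.sum_div]
          refine Finset.sum_congr rfl fun i _ => ?_
          rw [hβ, div_pow, mul_pow, sq_abs]
        rw [this, ← htsq k, div_self (pow_ne_zero 2 htk)]
    have hF3 : ∀ k, t k * ∑ i, β i k * d i k = ∑ i, (|lam i| * μm i k) * d i k := by
      intro k
      by_cases htk : t k = 0
      · have hz : ∑ i, (lam i)^2 * (μm i k)^2 = 0 := by
          have := htsq k
          rw [htk] at this
          simpa using this.symm
        have hz2 : ∀ i, |lam i| * μm i k = 0 := by
          intro i
          have hterm : (lam i)^2 * (μm i k)^2 = 0 :=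
            (Finset.sum_eq_zero_iff_of_nonneg fun i _ =>
              mul_nonneg (sq_nonneg _) (sq_nonneg _)).1 hz i (Finset.mem_univ i)
          have : (|lam i| * μm i k)^2 = 0 := by
            rw [mul_pow, sq_abs]; exact hterm
          exact pow_eq_zero_iff two_ne_zero |>.1 this
        rw [htk, zero_mul]
        exact (Finset.sum_eq_zero fun i _ => by rw [hz2 i, zero_mul]).symm
      · rw [Finset.mul_sum]
        refine Finset.sum_congr rfl fun i _ => ?_
        rw [hβ]
        field_simp
    have hsum_t : ∑ k, (t k)^2 ≤ 1 := by
      calc ∑ k, (t k)^2 = ∑ k, ∑ i, (lam i)^2 * (μm i k)^2 :=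
            Finset.sum_congr rfl fun k _ => htsq k
        _ = ∑ i, ∑ k, (lam i)^2 * (μm i k)^2 := Finset.sum_comm
        _ = ∑ i, (lam i)^2 * ∑ k, (μm i k)^2 := by
            refine Finset.sum_congr rfl fun i _ => ?_
            rw [Finset.mul_sum]
        _ ≤ ∑ i, (lam i)^2 * 1 := Finset.sum_le_sum fun i _ =>
            mul_le_mul_of_nonneg_left (h2 i) (sq_nonneg _)
        _ ≤ 1 := by simpa using hlam
    -- construct g k
    set Ik : Fin q → Finset (Fin p) := fun k =>
      Finset.univ.filter (fun i => gm i k ≠ 0 ∧ lam i ≠ 0) with hIk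
    set g : Fin q → ℕ →₀ ℝ := fun k =>
      M • ∑ i' : Fin (Ik k).card, β ((Ik k).equivFin.symm i').1 k • gm ((Ik k).equivFin.symm i').1 k with hg
    have hgd : ∀ k, dotp (g k) (x k) = M * ∑ i, β i k * d i k := by
      intro k
      rw [hg]
      simp only []
      rw [dotp_comb]
      congr 1
      rw [sum_equivFin (Ik k) (fun i => β i k * dotp (gm i k) (x k))]
      refine Finset.sum_subset (Finset.subset_univ _) fun i _ hiI => ?_
      simp only [hIk, Finset.mem_filter] at hiI
      push_neg at hiI
      by_cases hgz : gm i k = 0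
      · rw [hgz]
        simp [dotp]
      · have hlz : lam i = 0 := hiI (Finset.mem_univ i) hgz
        have hb0 : β i k = 0 := by simp [hβ, hlz]
        rw [hb0, zero_mul]
    have hsuppg : ∀ k, (g k).support ⊆
        ((M • ∑ i, lam i • f i) : ℕ →₀ ℝ).support ∩ (x k).support := by
      intro k n hn
      rw [Finsupp.mem_support_iff] at hn
      obtain ⟨i', hβne, hgn⟩ := mem_supp_comb hn
      set i : Fin p := ((Ik k).equivFin.symm i').1 with hi
      have hiI : i ∈ Ik k := ((Ik k).equivFin.symm i').2
      simp only [hIk, Finset.mem_filter] at hiI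
      obtain ⟨-, hgne, hlne⟩ := hiI
      have hsub := (h3 i k).resolve_left hgne |>.2
      have hnmem : n ∈ (gm i k).support := Finsupp.mem_support_iff.2 hgn
      have hmem2 := hsub hnmem
      rw [Finset.mem_inter] at hmem2
      refine Finset.mem_inter.2 ⟨?_, hmem2.2⟩
      exact supp_component_subset hMne hdisj hlne hmem2.1
    have hsubk : ∀ k i, (gm i k).support ⊆ (f i).support := by
      intro k i
      rcases h3 i k with h0 | hdw
      · rw [h0]; simp
      · exact hdw.2.trans Finset.inter_subset_left
    have hβsq' : ∀ k, ∑ i' : Fin (Ik k).card, (β ((Ik k).equivFin.symm i').1 k)^2 ≤ 1 := by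
      intro k
      rw [sum_equivFin (Ik k) (fun i => (β i k)^2)]
      exact le_trans (Finset.sum_le_sum_of_subset_of_nonneg (Finset.subset_univ _)
        (fun i _ _ => sq_nonneg _)) (hβsq k)
    refine ⟨t, g, htnn, hsum_t, ?_, ?_, ?_⟩
    · intro k
      right
      constructor
      · refine DW.even j (Ik k).card _ (fun i' => w ((Ik k).equivFin.symm i').1) _
          (fun i' => ?_) (fun i' i'' hne => ?_) ?_ (hβsq' k)
        · have hi := ((Ik k).equivFin.symm i').2
          simp only [hIk, Finset.mem_filter] at hi
          exact ((h3 _ k).resolve_left hi.2.1).1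
        · refine Finset.disjoint_of_subset_left (hsubk k _) ?_
          refine Finset.disjoint_of_subset_right (hsubk k _) ?_
          refine hdisj _ _ fun hc => hne ?_
          have := congrArg (Ik k).equivFin (Subtype.ext hc)
          simpa using this
        · rw [image_equivFin (Ik k) (fun i => minsupp (gm i k))]
          refine image_minsupp_spread hdisj (hsubk k) _ ?_ hallow
          intro i hi
          simp only [hIk, Finset.mem_filter] at hi
          exact hi.2.1
      · exact hsuppg k
    · intro k
      rw [hgd k]
      exact mul_nonneg hMnn (Finset.sum_nonneg fun i _ =>
        mul_nonneg (hβnn i k) (h4 i k))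
    · have habs : |dotp (M • ∑ i, lam i • f i) (∑ kk, x kk)| ≤
          M * ∑ i, |lam i| * ∑ k, μm i k * d i k := by
        rw [dotp_comb, abs_mul, abs_of_nonneg hMnn]
        refine mul_le_mul_of_nonneg_left ?_ hMnn
        calc |∑ i, lam i * dotp (f i) (∑ kk, x kk)|
            ≤ ∑ i, |lam i * dotp (f i) (∑ kk, x kk)| := Finset.abs_sum_le_sum_abs _ _
          _ ≤ ∑ i, |lam i| * ∑ k, μm i k * d i k := by
              refine Finset.sum_le_sum fun i _ => ?_
              rw [abs_mul]
              exact mul_le_mul_of_nonneg_left (h5 i) (abs_nonneg _)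
      refine le_trans habs (le_of_eq ?_)
      calc M * ∑ i, |lam i| * ∑ k, μm i k * d i k
          = M * ∑ i, ∑ k, (|lam i| * μm i k) * d i k := by
            congr 1
            refine Finset.sum_congr rfl fun i _ => ?_
            rw [Finset.mul_sum]
            exact Finset.sum_congr rfl fun k _ => by ring
        _ = M * ∑ k, ∑ i, (|lam i| * μm i k) * d i k := by rw [Finset.sum_comm]
        _ = ∑ k, t k * dotp (g k) (x k) := by
            rw [Finset.mul_sum]
            refine Finset.sum_congr rfl fun k _ => ?_
            rw [hgd k, ← hF3 k]
            ring
  | odd j p f E js lam hmem hsupp hspec hallow hbig hlam ih =>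
    choose μm gm h1 h2 h3 h4 h5 using ih
    set M : ℝ := ((mseq (2*j+1) : ℕ) : ℝ)⁻¹ with hM
    have hMnn : 0 ≤ M := mseq_inv_nonneg _
    have hMne : M ≠ 0 := by
      rw [hM]
      exact inv_ne_zero (ne_of_gt (mseq_cast_pos _))
    set d : Fin p → Fin q → ℝ := fun i k => dotp (gm i k) (x k) with hd
    set t : Fin q → ℝ := fun k => Real.sqrt (∑ i, (lam i)^2 * (μm i k)^2) with ht
    set β : Fin p → Fin q → ℝ := fun i k => (|lam i| * μm i k) / t k with hβ
    have hdisj : ∀ i i', i ≠ i' → Disjoint (f i).support (f i').support :=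
      supp_disj_of_odd hsupp hspec
    have htnn : ∀ k, 0 ≤ t k := fun k => Real.sqrt_nonneg _
    have htsq : ∀ k, (t k)^2 = ∑ i, (lam i)^2 * (μm i k)^2 := fun k =>
      Real.sq_sqrt (Finset.sum_nonneg fun i _ => mul_nonneg (sq_nonneg _) (sq_nonneg _))
    have hβnn : ∀ i k, 0 ≤ β i k := fun i k =>
      div_nonneg (mul_nonneg (abs_nonneg _) (h1 i k)) (htnn k)
    have hβsq : ∀ k, ∑ i, (β i k)^2 ≤ 1 := by
      intro k
      by_cases htk : t k = 0
      · simp only [hβ, htk, div_zero]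
        simp
      · have : ∑ i, (β i k)^2 = (∑ i, (lam i)^2 * (μm i k)^2) / (t k)^2 := by
          rw [Finset.sum_div]
          refine Finset.sum_congr rfl fun i _ => ?_
          rw [hβ, div_pow, mul_pow, sq_abs]
        rw [this, ← htsq k, div_self (pow_ne_zero 2 htk)]
    have hF3 : ∀ k, t k * ∑ i, β i k * d i k = ∑ i, (|lam i| * μm i k) * d i k := by
      intro k
      by_cases htk : t k = 0
      · have hz : ∑ i, (lam i)^2 * (μm i k)^2 = 0 := by
          have := htsq k
          rw [htk] at this
          simpa using this.symm
        have hz2 : ∀ i, |lam i| * μm i k = 0 := by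
          intro i
          have hterm : (lam i)^2 * (μm i k)^2 = 0 :=
            (Finset.sum_eq_zero_iff_of_nonneg fun i _ =>
              mul_nonneg (sq_nonneg _) (sq_nonneg _)).1 hz i (Finset.mem_univ i)
          have : (|lam i| * μm i k)^2 = 0 := by
            rw [mul_pow, sq_abs]; exact hterm
          exact pow_eq_zero_iff two_ne_zero |>.1 this
        rw [htk, zero_mul]
        exact (Finset.sum_eq_zero fun i _ => by rw [hz2 i, zero_mul]).symm
      · rw [Finset.mul_sum]
        refine Finset.sum_congr rfl fun i _ => ?_
        rw [hβ]
        field_simp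
    have hsum_t : ∑ k, (t k)^2 ≤ 1 := by
      calc ∑ k, (t k)^2 = ∑ k, ∑ i, (lam i)^2 * (μm i k)^2 :=
            Finset.sum_congr rfl fun k _ => htsq k
        _ = ∑ i, ∑ k, (lam i)^2 * (μm i k)^2 := Finset.sum_comm
        _ = ∑ i, (lam i)^2 * ∑ k, (μm i k)^2 := by
            refine Finset.sum_congr rfl fun i _ => ?_
            rw [Finset.mul_sum]
        _ ≤ ∑ i, (lam i)^2 * 1 := Finset.sum_le_sum fun i _ =>
            mul_le_mul_of_nonneg_left (h2 i) (sq_nonneg _)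
        _ ≤ 1 := by simpa using hlam
    set g : Fin q → ℕ →₀ ℝ := fun k => M • ∑ i, β i k • gm i k with hg
    have hgd : ∀ k, dotp (g k) (x k) = M * ∑ i, β i k * d i k := by
      intro k
      rw [hg]
      simp only []
      rw [dotp_comb]
    refine ⟨t, g, htnn, hsum_t, ?_, ?_, ?_⟩
    · intro k
      right
      constructor
      · refine DW.odd j p (fun i => gm i k) E js (fun i => β i k) (fun i => ?_)
          (fun i => ?_) hspec hallow hbig (hβsq k)
        · rcases h3 i k with h0 | hdw
          · simp only [h0]
            exact dw_zero N1 N2 σ (js i)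
          · exact hdw.1
        · rcases h3 i k with h0 | hdw
          · rw [h0]
            simp
          · exact (hdw.2.trans Finset.inter_subset_left).trans (hsupp i)
      · intro n hn
        rw [Finsupp.mem_support_iff] at hn
        obtain ⟨i, hβne, hgn⟩ := mem_supp_comb hn
        have hgne : gm i k ≠ 0 := fun hz => hgn (by rw [hz]; simp)
        have hlne : lam i ≠ 0 := by
          intro hz
          exact hβne (by simp [hβ, hz])
        have hsub := ((h3 i k).resolve_left hgne).2
        have hmem2 := hsub (Finsupp.mem_support_iff.2 hgn)
        rw [Finset.mem_inter] at hmem2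
        refine Finset.mem_inter.2 ⟨?_, hmem2.2⟩
        exact supp_component_subset hMne hdisj hlne hmem2.1
    · intro k
      rw [hgd k]
      exact mul_nonneg hMnn (Finset.sum_nonneg fun i _ =>
        mul_nonneg (hβnn i k) (h4 i k))
    · have habs : |dotp (M • ∑ i, lam i • f i) (∑ kk, x kk)| ≤
          M * ∑ i, |lam i| * ∑ k, μm i k * d i k := by
        rw [dotp_comb, abs_mul, abs_of_nonneg hMnn]
        refine mul_le_mul_of_nonneg_left ?_ hMnn
        calc |∑ i, lam i * dotp (f i) (∑ kk, x kk)|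
            ≤ ∑ i, |lam i * dotp (f i) (∑ kk, x kk)| := Finset.abs_sum_le_sum_abs _ _
          _ ≤ ∑ i, |lam i| * ∑ k, μm i k * d i k := by
              refine Finset.sum_le_sum fun i _ => ?_
              rw [abs_mul]
              exact mul_le_mul_of_nonneg_left (h5 i) (abs_nonneg _)
      refine le_trans habs (le_of_eq ?_)
      calc M * ∑ i, |lam i| * ∑ k, μm i k * d i k
          = M * ∑ i, ∑ k, (|lam i| * μm i k) * d i k := by
            congr 1
            refine Finset.sum_congr rfl fun i _ => ?_
            rw [Finset.mul_sum]
            exact Finset.sum_congr rfl fun k _ => by ring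
        _ = M * ∑ k, ∑ i, (|lam i| * μm i k) * d i k := by rw [Finset.sum_comm]
        _ = ∑ k, t k * dotp (g k) (x k) := by
            rw [Finset.mul_sum]
            refine Finset.sum_congr rfl fun k _ => ?_
            rw [hgd k, ← hF3 k]
            ring

lemma dotp_eq_left (f x : ℕ →₀ ℝ) : dotp f x = ∑ n ∈ f.support, f n * x n := rfl

lemma dotp_sum_right (f : ℕ →₀ ℝ) {q : ℕ} (y : Fin q → ℕ →₀ ℝ) :
    dotp f (∑ j, y j) = ∑ j, dotp f (y j) := by
  simp only [dotp_eq_left, Finsupp.finset_sum_apply, Finset.mul_sum]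
  exact Finset.sum_comm

lemma upper_est (N1 N2 : Set ℕ) (σ : List (Finset ℕ × ℕ) → ℕ) {q : ℕ}
    (x : Fin q → ℕ →₀ ℝ)
    (hx : ∀ k k', k ≠ k' → Disjoint (x k).support (x k').support) :
    wnorm N1 N2 σ (∑ k, x k) ≤ Real.sqrt (∑ k, (wnorm N1 N2 σ (x k)) ^ 2) := by
  refine csSup_le (wnormSet_nonempty _ _ _ _) ?_
  rintro r ⟨f, ⟨w, hf⟩, rfl⟩
  obtain ⟨μ, g, h1, h2, h3, h4, h5⟩ := claimU hf hx
  have hb : ∀ k, 0 ≤ wnorm N1 N2 σ (x k) := fun k => wnorm_nonneg _ _ _ _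
  have hstep : ∀ k, μ k * dotp (g k) (x k) ≤ μ k * wnorm N1 N2 σ (x k) := by
    intro k
    rcases h3 k with h0 | hdw
    · rw [h0]
      simp only [dotp, Finsupp.sum_zero_index, mul_zero]
      exact mul_nonneg (h1 k) (hb k)
    · exact mul_le_mul_of_nonneg_left (dotp_le_wnorm ⟨w, hdw.1⟩) (h1 k)
  have hCS : ∑ k, μ k * wnorm N1 N2 σ (x k) ≤ Real.sqrt (∑ k, (wnorm N1 N2 σ (x k))^2) := by
    have hnn : 0 ≤ ∑ k, μ k * wnorm N1 N2 σ (x k) :=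
      Finset.sum_nonneg fun k _ => mul_nonneg (h1 k) (hb k)
    have hsq : (∑ k, μ k * wnorm N1 N2 σ (x k))^2 ≤ ∑ k, (wnorm N1 N2 σ (x k))^2 := by
      calc (∑ k, μ k * wnorm N1 N2 σ (x k))^2
          ≤ (∑ k, (μ k)^2) * ∑ k, (wnorm N1 N2 σ (x k))^2 :=
            Finset.sum_mul_sq_le_sq_mul_sq _ _ _
        _ ≤ 1 * ∑ k, (wnorm N1 N2 σ (x k))^2 :=
            mul_le_mul_of_nonneg_right h2 (Finset.sum_nonneg fun k _ => sq_nonneg _)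
        _ = _ := one_mul _
    calc ∑ k, μ k * wnorm N1 N2 σ (x k)
        = Real.sqrt ((∑ k, μ k * wnorm N1 N2 σ (x k))^2) := (Real.sqrt_sq hnn).symm
      _ ≤ _ := Real.sqrt_le_sqrt hsq
  calc dotp f (∑ k, x k) ≤ |dotp f (∑ kk, x kk)| := le_abs_self _
    _ ≤ ∑ k, μ k * dotp (g k) (x k) := h5
    _ ≤ ∑ k, μ k * wnorm N1 N2 σ (x k) := Finset.sum_le_sum fun k _ => hstep k
    _ ≤ _ := hCS

set_option maxHeartbeats 1000000 in
lemma lower_est (N1 N2 : Set ℕ) (σ : List (Finset ℕ × ℕ) → ℕ) {q : ℕ}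
    (x : Fin q → ℕ →₀ ℝ)
    (hx : ∀ k k', k ≠ k' → Disjoint (x k).support (x k').support)
    (hmin : ∀ k : Fin q, ∀ a ∈ (x k).support, q ≤ a) :
    Real.sqrt (∑ k, (wnorm N1 N2 σ (x k)) ^ 2) ≤ 2 * wnorm N1 N2 σ (∑ k, x k) := by
  classical
  set b : Fin q → ℝ := fun k => wnorm N1 N2 σ (x k) with hbdef
  set W : ℝ := wnorm N1 N2 σ (∑ k, x k) with hWdef
  have hbnn : ∀ k, 0 ≤ b k := fun k => wnorm_nonneg _ _ _ _
  have hWnn : 0 ≤ W := wnorm_nonneg _ _ _ _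
  set B : ℝ := ∑ k, b k with hBdef
  have hB : 0 ≤ B := Finset.sum_nonneg fun k _ => hbnn k
  have hq0 : (0:ℝ) ≤ (q:ℝ) := Nat.cast_nonneg q
  have main : ∀ ε : ℝ, 0 < ε → Real.sqrt (∑ k, (b k)^2) ≤ 2 * W + ε := by
    intro ε hε
    set ε' : ℝ := min 1 (ε^2/(2*B + 2*(q:ℝ) + 1)) with hε'def
    have hden : (0:ℝ) < 2*B + 2*(q:ℝ) + 1 := by linarith
    have hε'pos : 0 < ε' := lt_min one_pos (div_pos (by positivity) hden)
    have hε'1 : ε' ≤ 1 := min_le_left _ _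
    have hε'le : ε' * (2*B + 2*(q:ℝ)) ≤ ε^2 := by
      have h1 : ε' ≤ ε^2/(2*B+2*(q:ℝ)+1) := min_le_right _ _
      have h3 : (0:ℝ) ≤ 2*B + 2*(q:ℝ) := by linarith
      calc ε' * (2*B+2*(q:ℝ)) ≤ ε^2/(2*B+2*(q:ℝ)+1) * (2*B+2*(q:ℝ)) :=
            mul_le_mul_of_nonneg_right h1 h3
        _ ≤ ε^2 := by
            rw [div_mul_eq_mul_div, div_le_iff₀ hden]
            nlinarith [sq_nonneg ε]
    -- choose near-optimal functionals
    have hex : ∀ k, ∃ fk, DWh N1 N2 σ fk ∧ b k - ε' < dotp fk (x k) := by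
      intro k
      have hlt : b k - ε' < b k := by linarith
      obtain ⟨r, ⟨fk, hfk, rfl⟩, hr⟩ :=
        exists_lt_of_lt_csSup (wnormSet_nonempty N1 N2 σ (x k)) hlt
      exact ⟨fk, hfk, hr⟩
    choose fk hfk hagt' using hex
    choose wk hwk using hfk
    set g : Fin q → ℕ →₀ ℝ := fun k => (fk k).filter (· ∈ (x k).support) with hgdef
    have hgsupp : ∀ k, (g k).support ⊆ (x k).support := by
      intro k n hn
      rw [hgdef] at hn
      simp only [Finsupp.support_filter, Finset.mem_filter] at hn
      exact hn.2
    set a : Fin q → ℝ := fun k => dotp (g k) (x k) with hadef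
    have haeq : ∀ k, a k = dotp (fk k) (x k) := by
      intro k
      rw [hadef]
      exact dotp_filter (Finset.Subset.refl _)
    have hagt : ∀ k, b k - ε' < a k := fun k => (haeq k) ▸ hagt' k
    have hale : ∀ k, a k ≤ b k := by
      intro k
      rw [haeq k]
      exact dotp_le_wnorm ⟨wk k, hwk k⟩
    set K : Finset (Fin q) := Finset.univ.filter (fun k => ε' < b k) with hKdef
    have hKg : ∀ k ∈ K, g k ≠ 0 := by
      intro k hk h0
      have h1 : a k = 0 := by rw [hadef]; simp only [h0]; simp [dotp]
      have h2 : ε' < b k := (Finset.mem_filter.1 hk).2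
      have := hagt k
      linarith
    have hKapos : ∀ k ∈ K, 0 < a k := by
      intro k hk
      have h2 : ε' < b k := (Finset.mem_filter.1 hk).2
      have := hagt k
      linarith
    set S : ℝ := Real.sqrt (∑ k ∈ K, (a k)^2) with hSdef
    have hSnn : 0 ≤ S := Real.sqrt_nonneg _
    have hS2 : S^2 = ∑ k ∈ K, (a k)^2 :=
      Real.sq_sqrt (Finset.sum_nonneg fun k _ => sq_nonneg _)
    have hSW : S ≤ 2 * W := by
      by_cases hS0 : S = 0
      · rw [hS0]; linarith
      have hSpos : 0 < S := lt_of_le_of_ne hSnn (Ne.symm hS0)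
      set F : ℕ →₀ ℝ := ((mseq (2*0) : ℕ) : ℝ)⁻¹ •
        ∑ i' : Fin K.card, (a (K.equivFin.symm i').1 / S) • g (K.equivFin.symm i').1 with hFdef
      have hFdw : DW N1 N2 σ F (mseq (2*0)) := by
        refine DW.even 0 K.card _ (fun i' => wk (K.equivFin.symm i').1) _
          (fun i' => ?_) (fun i' i'' hne => ?_) ?_ ?_
        · exact (dw_restrict (hwk _) _).resolve_left (hKg _ (K.equivFin.symm i').2)
        · refine Finset.disjoint_of_subset_left (hgsupp _) ?_
          refine Finset.disjoint_of_subset_right (hgsupp _) ?_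
          refine hx _ _ fun hc => hne ?_
          have := congrArg K.equivFin (Subtype.ext hc)
          simpa using this
        · rw [image_equivFin K (fun k => minsupp (g k))]
          show K.image (fun k => minsupp (g k)) ∈ SchreierOne
          intro m hm
          obtain ⟨k, hk, rfl⟩ := Finset.mem_image.1 hm
          have h1 : minsupp (g k) ∈ (x k).support :=
            hgsupp k (minsupp_mem (hKg k hk))
          calc (K.image fun k => minsupp (g k)).card ≤ K.card := Finset.card_image_le
            _ ≤ q := by
                have := Finset.card_filter_le Finset.univ (fun k => ε' < b k)
                simpa [hKdef] using this
            _ ≤ minsupp (g k) := hmin k _ h1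
        · rw [sum_equivFin K (fun k => (a k / S)^2)]
          have : ∑ k ∈ K, (a k / S)^2 = (∑ k ∈ K, (a k)^2) / S^2 := by
            rw [Finset.sum_div]
            exact Finset.sum_congr rfl fun k _ => div_pow _ _ _
          rw [this, ← hS2, div_self (pow_ne_zero 2 hS0)]
      have hFd : dotp F (∑ kk, x kk) = S / 2 := by
        have hm0 : ((mseq (2*0) : ℕ) : ℝ) = 2 := by norm_num [mseq]
        rw [hFdef, dotp_comb, hm0]
        have hgd : ∀ k ∈ K, dotp (g k) (∑ kk, x kk) = a k := by
          intro k hk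
          rw [dotp_sum_right]
          rw [Finset.sum_eq_single k (fun j _ hj => ?_) (by simp)]
          · refine dotp_eq_zero_of_disj ?_
            refine Finset.disjoint_of_subset_left (hgsupp _) ?_
            exact hx _ _ (Ne.symm hj)
        have : ∑ i' : Fin K.card,
            (a (K.equivFin.symm i').1 / S) * dotp (g (K.equivFin.symm i').1) (∑ kk, x kk)
            = ∑ k ∈ K, (a k / S) * a k := by
          rw [sum_equivFin K (fun k => (a k / S) * dotp (g k) (∑ kk, x kk))]
          exact Finset.sum_congr rfl fun k hk => by rw [hgd k hk]
        rw [this]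
        have : ∑ k ∈ K, (a k / S) * a k = (∑ k ∈ K, (a k)^2) / S := by
          rw [Finset.sum_div]
          exact Finset.sum_congr rfl fun k _ => by ring
        rw [this, ← hS2]
        rw [pow_two, mul_div_assoc, div_self hS0]
        ring
      have := dotp_le_wnorm (x := ∑ kk, x kk) ⟨mseq (2*0), hFdw⟩
      rw [hFd] at this
      rw [hWdef]
      linarith
    -- numeric estimate
    have hKbound : ∀ k ∈ K, (b k)^2 ≤ (a k)^2 + 2*ε'*(b k) + ε'*ε' := by
      intro k hk
      have h1 := hagt k
      have h2 := hale k
      have h3 := hbnn k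
      nlinarith
    have hKcard : ((K.card : ℝ)) ≤ (q:ℝ) := by
      have := Finset.card_filter_le Finset.univ (fun k => ε' < b k)
      have h2 : K.card ≤ q := by simpa [hKdef] using this
      exact_mod_cast h2
    have hsum1 : ∑ k ∈ K, (b k)^2 ≤ (∑ k ∈ K, (a k)^2) + 2*ε'*B + (q:ℝ)*(ε'*ε') := by
      calc ∑ k ∈ K, (b k)^2 ≤ ∑ k ∈ K, ((a k)^2 + 2*ε'*(b k) + ε'*ε') :=
            Finset.sum_le_sum hKbound
        _ = (∑ k ∈ K, (a k)^2) + 2*ε'*(∑ k ∈ K, b k) + (K.card:ℝ)*(ε'*ε') := by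
            rw [Finset.sum_add_distrib, Finset.sum_add_distrib, ← Finset.mul_sum,
              Finset.sum_const, nsmul_eq_mul]
        _ ≤ _ := by
            have hsub : ∑ k ∈ K, b k ≤ B := by
              rw [hBdef]
              exact Finset.sum_le_sum_of_subset_of_nonneg (Finset.subset_univ _)
                (fun k _ _ => hbnn k)
            have h4 : 0 ≤ ε' * ε' := mul_nonneg hε'pos.le hε'pos.le
            nlinarith
    have hsum2 : ∑ k ∈ Finset.univ.filter (fun k => ¬ ε' < b k), (b k)^2 ≤ (q:ℝ)*(ε'*ε') := by
      have hper : ∀ k ∈ Finset.univ.filter (fun k => ¬ ε' < b k), (b k)^2 ≤ ε'*ε' := by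
        intro k hk
        have h1 : ¬ ε' < b k := (Finset.mem_filter.1 hk).2
        push_neg at h1
        nlinarith [hbnn k]
      calc ∑ k ∈ Finset.univ.filter (fun k => ¬ ε' < b k), (b k)^2
          ≤ ∑ _k ∈ Finset.univ.filter (fun k => ¬ ε' < b k), (ε'*ε') :=
            Finset.sum_le_sum hper
        _ = ((Finset.univ.filter (fun k => ¬ ε' < b k)).card : ℝ) * (ε'*ε') := by
            rw [Finset.sum_const, nsmul_eq_mul]
        _ ≤ (q:ℝ)*(ε'*ε') := by
            have h2 : (Finset.univ.filter (fun k => ¬ ε' < b k)).card ≤ q := by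
              have := Finset.card_filter_le Finset.univ (fun k => ¬ ε' < b k)
              simpa using this
            have h3 : 0 ≤ ε' * ε' := mul_nonneg hε'pos.le hε'pos.le
            have h4 : ((Finset.univ.filter (fun k => ¬ ε' < b k)).card : ℝ) ≤ (q:ℝ) := by
              exact_mod_cast h2
            nlinarith
    have hsplit : ∑ k, (b k)^2 = ∑ k ∈ K, (b k)^2 +
        ∑ k ∈ Finset.univ.filter (fun k => ¬ ε' < b k), (b k)^2 := by
      rw [hKdef]
      exact (Finset.sum_filter_add_sum_filter_not Finset.univ _ _).symm
    have hqe : (q:ℝ)*(ε'*ε') ≤ (q:ℝ)*ε' := by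
      have := mul_le_mul_of_nonneg_left hε'1 (mul_nonneg hq0 hε'pos.le)
      calc (q:ℝ)*(ε'*ε') = ((q:ℝ)*ε')*ε' := by ring
        _ ≤ ((q:ℝ)*ε')*1 := this
        _ = (q:ℝ)*ε' := by ring
    have htot : ∑ k, (b k)^2 ≤ S^2 + ε^2 := by
      rw [hsplit]
      nlinarith [hS2, hsum1, hsum2, hqe, hε'le]
    have hsq2 : Real.sqrt (S^2 + ε^2) ≤ S + ε := by
      have h1 : S^2 + ε^2 ≤ (S+ε)^2 := by nlinarith
      calc Real.sqrt (S^2 + ε^2) ≤ Real.sqrt ((S+ε)^2) := Real.sqrt_le_sqrt h1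
        _ = S + ε := Real.sqrt_sq (by linarith)
    calc Real.sqrt (∑ k, (b k)^2) ≤ Real.sqrt (S^2 + ε^2) := Real.sqrt_le_sqrt htot
      _ ≤ S + ε := hsq2
      _ ≤ 2*W + ε := by linarith
  by_contra hcon
  push_neg at hcon
  set ε : ℝ := (Real.sqrt (∑ k, (b k)^2) - 2*W)/2 with hεdef
  have hεpos : 0 < ε := by
    rw [hεdef]
    linarith
  have := main ε hεpos
  rw [hεdef] at this
  linarith


/-- In `X_wh`, for every sequence `(x_k)_{k=1}^d` of disjointly
supported vectors with `d ≤ min supp x_k` for each `k`, one has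
`(1/2)(∑ ‖x_k‖^2)^{1/2} ≤ ‖∑ x_k‖`.  Combined with the upper `ℓ_2` estimate
`‖∑ x_k‖ ≤ (∑ ‖x_k‖^2)^{1/2}`, the basis of `X_wh` is asymptotic `ℓ_2` for vectors with
disjoint supports, with constant 2. -/
theorem lower_ell2_estimate (N1 N2 : Set ℕ) (σ : List (Finset ℕ × ℕ) → ℕ)
    (hN : N1 ∪ N2 = Set.univ) (hN1 : N1.Infinite) (hN2 : N2.Infinite)
    (hσ : GoodCoding N1 N2 σ)
    (d : ℕ) (x : Fin d → ℕ →₀ ℝ)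
    (hx : ∀ k k', k ≠ k' → Disjoint (x k).support (x k').support)
    (hmin : ∀ k : Fin d, ∀ a ∈ (x k).support, d ≤ a) :
    (1 / 2) * Real.sqrt (∑ k, (wnorm N1 N2 σ (x k)) ^ 2) ≤ wnorm N1 N2 σ (∑ k, x k) ∧
    wnorm N1 N2 σ (∑ k, x k) ≤ Real.sqrt (∑ k, (wnorm N1 N2 σ (x k)) ^ 2) := by
  constructor
  · have := lower_est N1 N2 σ x hx hmin
    linarith
  · exact upper_est N1 N2 σ x hx
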